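/- Let $\mathcal{T}_X$ be an essential complexified toric arrangement in $(\mathbb{C}^*)^n$ with $n\geq 2$. Then the compact singular set $\Sigma^{cpt}=\Sigma_X\cap(S^1)^n$ is path-connected. -/

import Mathlib

/-- A character is primitive if the gcd of its coordinates is `1`. -/
def IsPrimitiveChar {n : ℕ} (χ : Fin n → ℤ) : Prop := ∃ c : Fin n → ℤ, ∑ i, c i * χ i = 1

noncomputable section CompactToric

/-- The compact torus `(S¹)^n`. -/
abbrev CTorus (n : ℕ) := Fin n → Circle

/-- The character of the compact torus associated to an integer vector. -/
def cTorusChar {n : ℕ} (χ : Fin n → ℤ) (t : CTorus n) : Circle := ∏ i, t i ^ χ i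

/-- A complexified toric arrangement: all defining constants have modulus one, so we record
them as elements of the circle. -/
structure CToricArrangement (n : ℕ) where
  X : Finset ((Fin n → ℤ) × Circle)
  prim : ∀ p ∈ X, IsPrimitiveChar p.1

namespace CToricArrangement

variable {n : ℕ} (A : CToricArrangement n)

/-- The compact toric hyperplane `H_{χ,a} ∩ (S¹)^n`. -/
def hyp (p : (Fin n → ℤ) × Circle) : Set (CTorus n) := {t | cTorusChar p.1 t = p.2}

/-- The compact singular set `Σ^{cpt}`. -/
def sing : Set (CTorus n) := ⋃ p ∈ A.X, hyp p

/-- The rank: the dimension of the real span of the character set. -/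
def rank : ℕ :=
  Module.finrank ℝ (Submodule.span ℝ
    ((fun χ : Fin n → ℤ => fun i => (χ i : ℝ)) '' {χ | ∃ a, (χ, a) ∈ A.X}) :
      Submodule ℝ (Fin n → ℝ))

/-- Essential: the characters span `ℝ^n`. -/
def Essential : Prop := A.rank = n

end CToricArrangement

end CompactToric

namespace ToricAux

open Circle

noncomputable section

lemma exp_zpow (k : ℤ) (x : ℝ) : Circle.exp x ^ k = Circle.exp (k * x) := by
  have h := map_zsmul Circle.expHom k x
  simpa [zsmul_eq_mul, ← ofMul_zpow] using h.symm

lemma exp_sum {ι : Type*} (s : Finset ι) (f : ι → ℝ) :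
    Circle.exp (∑ i ∈ s, f i) = ∏ i ∈ s, Circle.exp (f i) := by
  classical
  induction s using Finset.induction with
  | empty => simp
  | insert _ _ h ih => simp [Finset.sum_insert h, Finset.prod_insert h, Circle.exp_add, ih]

/-- The exponential map `ℝⁿ → (S¹)ⁿ`. -/
def expPi {n : ℕ} (θ : Fin n → ℝ) : CTorus n := fun i => Circle.exp (θ i)

lemma continuous_expPi {n : ℕ} : Continuous (expPi (n := n)) :=
  continuous_pi fun i => Circle.exp.continuous.comp (continuous_apply i)

lemma cTorusChar_expPi {n : ℕ} (χ : Fin n → ℤ) (θ : Fin n → ℝ) :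
    cTorusChar χ (expPi θ) = Circle.exp (∑ i, (χ i : ℝ) * θ i) := by
  rw [cTorusChar, exp_sum]
  exact Finset.prod_congr rfl fun i _ => exp_zpow (χ i) (θ i)

/-- The real cast of an integer character. -/
def castChar {n : ℕ} (χ : Fin n → ℤ) : Fin n → ℝ := fun i => (χ i : ℝ)

lemma castChar_ne_zero {n : ℕ} {χ : Fin n → ℤ} (h : IsPrimitiveChar χ) : castChar χ ≠ 0 := by
  obtain ⟨c, hc⟩ := h
  intro h0
  have hz : ∀ i, χ i = 0 := by
    intro i
    have : (χ i : ℝ) = 0 := congrFun h0 i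
    exact_mod_cast this
  simp [hz] at hc


lemma prim_cast_sum {n : ℕ} {χ : Fin n → ℤ} {c : Fin n → ℤ} (hc : ∑ i, c i * χ i = 1) :
    ∑ i, (χ i : ℝ) * (c i : ℝ) = 1 := by
  have h1 : ((∑ i, c i * χ i : ℤ) : ℝ) = 1 := by rw [hc]; norm_num
  push_cast at h1
  rw [← h1]
  exact Finset.sum_congr rfl fun i _ => by ring

/-- A point of `hyp p` on the "principal" affine hyperplane lift. -/
lemma hyp_eq_image {n : ℕ} (p : (Fin n → ℤ) × Circle) (hp : IsPrimitiveChar p.1) :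
    CToricArrangement.hyp p =
      expPi '' {θ : Fin n → ℝ | ∑ i, (p.1 i : ℝ) * θ i = Complex.arg p.2} := by
  obtain ⟨c, hc⟩ := hp
  ext t
  constructor
  · intro ht
    set θ : Fin n → ℝ := fun i => Complex.arg (t i) with hθ
    have hexp : expPi θ = t := funext fun i => Circle.exp_arg (t i)
    have h1 : Circle.exp (∑ i, (p.1 i : ℝ) * θ i) = Circle.exp (Complex.arg p.2) := by
      rw [← cTorusChar_expPi, hexp, Circle.exp_arg]
      exact ht
    obtain ⟨m, hm⟩ := Circle.exp_eq_exp.mp h1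
    refine ⟨fun i => θ i - (m : ℝ) * (2 * Real.pi) * (c i : ℝ), ?_, ?_⟩
    · have hc' : ∑ i, (p.1 i : ℝ) * (c i : ℝ) = 1 := prim_cast_sum hc
      have : ∑ i, (p.1 i : ℝ) * (θ i - (m : ℝ) * (2 * Real.pi) * (c i : ℝ)) =
          (∑ i, (p.1 i : ℝ) * θ i) - (m : ℝ) * (2 * Real.pi) *
            ∑ i, (p.1 i : ℝ) * (c i : ℝ) := by
        rw [Finset.mul_sum, ← Finset.sum_sub_distrib]
        exact Finset.sum_congr rfl fun i _ => by ring
      rw [Set.mem_setOf_eq, this, hc', hm]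
      ring
    · rw [← hexp]
      funext i
      show Circle.exp (θ i - (m : ℝ) * (2 * Real.pi) * (c i : ℝ)) = Circle.exp (θ i)
      have : θ i - (m : ℝ) * (2 * Real.pi) * (c i : ℝ) =
          θ i + ((-(m * c i) : ℤ) : ℝ) * (2 * Real.pi) := by push_cast; ring
      rw [this, Circle.exp_add, Circle.exp_int_mul_two_pi, mul_one]
  · rintro ⟨θ, hθ, rfl⟩
    show cTorusChar p.1 (expPi θ) = p.2
    rw [cTorusChar_expPi, hθ, Circle.exp_arg]

lemma hyp_pathConnected {n : ℕ} (p : (Fin n → ℤ) × Circle) (hp : IsPrimitiveChar p.1) :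
    IsPathConnected (CToricArrangement.hyp p) := by
  obtain ⟨c, hc⟩ := id hp
  rw [hyp_eq_image p hp]
  refine (IsPathConnected.image ?_ continuous_expPi)
  set α := Complex.arg p.2
  have hconv : Convex ℝ {θ : Fin n → ℝ | ∑ i, (p.1 i : ℝ) * θ i = α} := by
    intro x hx y hy a b ha hb hab
    simp only [Set.mem_setOf_eq] at hx hy ⊢
    have : ∑ i, (p.1 i : ℝ) * (a * x i + b * y i) =
        a * ∑ i, (p.1 i : ℝ) * x i + b * ∑ i, (p.1 i : ℝ) * y i := by
      rw [Finset.mul_sum, Finset.mul_sum, ← Finset.sum_add_distrib]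
      exact Finset.sum_congr rfl fun i _ => by ring
    calc ∑ i, (p.1 i : ℝ) * (a • x + b • y) i
        = ∑ i, (p.1 i : ℝ) * (a * x i + b * y i) := rfl
      _ = a * ∑ i, (p.1 i : ℝ) * x i + b * ∑ i, (p.1 i : ℝ) * y i := this
      _ = (a + b) * α := by rw [hx, hy]; ring
      _ = α := by rw [hab, one_mul]
  have hne : ({θ : Fin n → ℝ | ∑ i, (p.1 i : ℝ) * θ i = α}).Nonempty := by
    refine ⟨fun i => α * (c i : ℝ), ?_⟩
    have hc' : ∑ i, (p.1 i : ℝ) * (c i : ℝ) = 1 := prim_cast_sum hc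
    show ∑ i, (p.1 i : ℝ) * (α * (c i : ℝ)) = α
    have : ∑ i, (p.1 i : ℝ) * (α * (c i : ℝ)) = α * ∑ i, (p.1 i : ℝ) * (c i : ℝ) := by
      rw [Finset.mul_sum]; exact Finset.sum_congr rfl fun i _ => by ring
    rw [this, hc', mul_one]
  exact hconv.isPathConnected hne

/-- The standard dot product on `Fin n → ℝ`. -/
def dot {n : ℕ} (x y : Fin n → ℝ) : ℝ := ∑ i, x i * y i

lemma dot_self_pos {n : ℕ} {x : Fin n → ℝ} (hx : x ≠ 0) : 0 < dot x x := by
  obtain ⟨i, hi⟩ := Function.ne_iff.mp hx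
  exact Finset.sum_pos' (fun j _ => mul_self_nonneg _) ⟨i, Finset.mem_univ i, mul_self_pos.mpr hi⟩

lemma dot_smul_right {n : ℕ} (c : ℝ) (x y : Fin n → ℝ) : dot x (c • y) = c * dot x y := by
  simp only [dot, Pi.smul_apply, smul_eq_mul, Finset.mul_sum]
  exact Finset.sum_congr rfl fun i _ => by ring

lemma dot_add_right {n : ℕ} (x y z : Fin n → ℝ) : dot x (y + z) = dot x y + dot x z := by
  simp only [dot, Pi.add_apply, mul_add, Finset.sum_add_distrib]

lemma dot_sub_right {n : ℕ} (x y z : Fin n → ℝ) : dot x (y - z) = dot x y - dot x z := by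
  simp only [dot, Pi.sub_apply, mul_sub, Finset.sum_sub_distrib]

lemma dot_comm {n : ℕ} (x y : Fin n → ℝ) : dot x y = dot y x :=
  Finset.sum_congr rfl fun i _ => mul_comm _ _

/-- Orthogonal complement witness. -/
lemma perp_aux {n : ℕ} {u v : Fin n → ℝ} (hu : u ≠ 0) (hv : v ∉ Submodule.span ℝ {u}) :
    ∃ w : Fin n → ℝ, dot u w = 0 ∧ dot v w ≠ 0 := by
  obtain ⟨r, hr⟩ : ∃ r : ℝ, r = dot u v / dot u u := ⟨_, rfl⟩
  obtain ⟨w, hwdef⟩ : ∃ w : Fin n → ℝ, w = v - r • u := ⟨_, rfl⟩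
  have hw0 : w ≠ 0 := by
    intro h
    apply hv
    refine Submodule.mem_span_singleton.mpr ⟨r, ?_⟩
    have h2 : v - r • u = 0 := by rw [← hwdef]; exact h
    exact (sub_eq_zero.mp h2).symm
  have huw : dot u w = 0 := by
    rw [hwdef, dot_sub_right, dot_smul_right, hr]
    field_simp [(dot_self_pos hu).ne']
    simp
  have hv' : v = w + r • u := by rw [hwdef]; abel
  have h2 : dot v w = dot w w := by
    calc dot v w = dot w v := dot_comm _ _
      _ = dot w (w + r • u) := by rw [← hv']
      _ = dot w w + r * dot w u := by rw [dot_add_right, dot_smul_right]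
      _ = dot w w := by rw [dot_comm w u, huw, mul_zero, add_zero]
  exact ⟨w, huw, by rw [h2]; exact (dot_self_pos hw0).ne'⟩

/-- Given independent `u, v`, dot products can take arbitrary prescribed values. -/
lemma exists_dot_eq {n : ℕ} {u v : Fin n → ℝ} (hu : u ≠ 0)
    (hv : v ∉ Submodule.span ℝ {u}) (α β : ℝ) :
    ∃ θ : Fin n → ℝ, dot u θ = α ∧ dot v θ = β := by
  have hv0 : v ≠ 0 := fun h => hv (h ▸ Submodule.zero_mem _)
  have huv : u ∉ Submodule.span ℝ ({v} : Set (Fin n → ℝ)) := by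
    intro h
    obtain ⟨c, hc⟩ := Submodule.mem_span_singleton.mp h
    have hc0 : c ≠ 0 := by rintro rfl; simp at hc; exact hu hc.symm
    exact hv (Submodule.mem_span_singleton.mpr
      ⟨c⁻¹, by rw [← hc, smul_smul, inv_mul_cancel₀ hc0, one_smul]⟩)
  obtain ⟨w, huw, hvw⟩ := perp_aux hu hv
  obtain ⟨w', hvw', huw'⟩ := perp_aux hv0 huv
  refine ⟨(α / dot u w') • w' + (β / dot v w) • w, ?_, ?_⟩
  · rw [dot_add_right, dot_smul_right, dot_smul_right, huw]
    field_simp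
    ring
  · rw [dot_add_right, dot_smul_right, dot_smul_right, hvw']
    field_simp
    ring

/-- Two hypersurfaces with non-parallel characters intersect. -/
lemma hyp_inter_nonempty {n : ℕ} (p q : (Fin n → ℤ) × Circle)
    (hp : IsPrimitiveChar p.1)
    (hup : castChar p.1 ≠ 0)
    (hq : castChar q.1 ∉ Submodule.span ℝ {castChar p.1}) :
    (CToricArrangement.hyp p ∩ CToricArrangement.hyp q).Nonempty := by
  obtain ⟨θ, h1, h2⟩ := exists_dot_eq hup hq (Complex.arg p.2) (Complex.arg q.2)
  refine ⟨expPi θ, ?_, ?_⟩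
  · show cTorusChar p.1 (expPi θ) = p.2
    rw [cTorusChar_expPi]
    have : ∑ i, (p.1 i : ℝ) * θ i = Complex.arg p.2 := h1
    rw [this, Circle.exp_arg]
  · show cTorusChar q.1 (expPi θ) = q.2
    rw [cTorusChar_expPi]
    have : ∑ i, (q.1 i : ℝ) * θ i = Complex.arg q.2 := h2
    rw [this, Circle.exp_arg]

end

end ToricAux

theorem compact_singular_set_path_connected (n : ℕ) (hn : 2 ≤ n)
    (A : CToricArrangement n) (hess : A.Essential) :
    IsPathConnected A.sing := by
  classical
  open ToricAux in
  have hrank : Module.finrank ℝ (Submodule.span ℝ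
      ((fun χ : Fin n → ℤ => fun i => (χ i : ℝ)) '' {χ | ∃ a, (χ, a) ∈ A.X}) :
        Submodule ℝ (Fin n → ℝ)) = n := hess
  set S := (fun χ : Fin n → ℤ => fun i => (χ i : ℝ)) '' {χ | ∃ a, (χ, a) ∈ A.X} with hS
  -- a nonzero character
  have h1 : ∃ u ∈ S, u ≠ 0 := by
    by_contra h
    push_neg at h
    rw [Submodule.span_eq_bot.mpr h, finrank_bot] at hrank
    omega
  obtain ⟨u, huS, hu0⟩ := h1
  -- a character not parallel to it
  have h2 : ∃ v ∈ S, v ∉ Submodule.span ℝ {u} := by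
    by_contra h
    push_neg at h
    have hle : Submodule.span ℝ S ≤ Submodule.span ℝ {u} := Submodule.span_le.mpr h
    have hmono := Submodule.finrank_mono hle
    rw [hrank, finrank_span_singleton hu0] at hmono
    omega
  obtain ⟨v, hvS, hvu⟩ := h2
  obtain ⟨χ₀, ⟨a₀, hp₀X⟩, hu⟩ := huS
  obtain ⟨χ₁, ⟨a₁, hp₁X⟩, hv⟩ := hvS
  have hu' : ToricAux.castChar χ₀ = u := hu
  have hv' : ToricAux.castChar χ₁ = v := hv
  have prim0 : IsPrimitiveChar χ₀ := A.prim _ hp₀X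
  have prim1 : IsPrimitiveChar χ₁ := A.prim _ hp₁X
  have hsub : ∀ p ∈ A.X, CToricArrangement.hyp p ⊆ A.sing :=
    fun p hp t ht => Set.mem_biUnion hp ht
  have hcast0 : ToricAux.castChar χ₀ ≠ 0 := by rw [hu']; exact hu0
  -- base point on both distinguished hypersurfaces
  obtain ⟨z, hz0, hz1⟩ := ToricAux.hyp_inter_nonempty (χ₀, a₀) (χ₁, a₁) prim0 hcast0
    (by show ToricAux.castChar χ₁ ∉ _; rw [hu', hv']; exact hvu)
  refine ⟨z, hsub _ hp₀X hz0, ?_⟩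
  intro t ht
  obtain ⟨p, hpX, htp⟩ := Set.mem_iUnion₂.mp ht
  have hprim : IsPrimitiveChar p.1 := A.prim p hpX
  have hpc0 : ToricAux.castChar p.1 ≠ 0 := ToricAux.castChar_ne_zero hprim
  by_cases hcase : ToricAux.castChar p.1 ∈ Submodule.span ℝ {u}
  · -- route through `hyp (χ₁, a₁)`
    have h3 : ToricAux.castChar χ₁ ∉ Submodule.span ℝ {ToricAux.castChar p.1} := by
      intro hmem
      apply hvu
      rw [← hv']
      have hle : Submodule.span ℝ {ToricAux.castChar p.1} ≤ Submodule.span ℝ {u} :=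
        Submodule.span_le.mpr (Set.singleton_subset_iff.mpr hcase)
      exact hle hmem
    obtain ⟨w, hwp, hw1⟩ := ToricAux.hyp_inter_nonempty p (χ₁, a₁) hprim hpc0 h3
    have j1 : JoinedIn A.sing w t :=
      ((ToricAux.hyp_pathConnected p hprim).joinedIn w hwp t htp).mono (hsub p hpX)
    have j2 : JoinedIn A.sing z w :=
      ((ToricAux.hyp_pathConnected (χ₁, a₁) prim1).joinedIn z hz1 w hw1).mono (hsub _ hp₁X)
    exact j2.trans j1
  · -- route through `hyp (χ₀, a₀)`
    have h3 : ToricAux.castChar p.1 ∉ Submodule.span ℝ {ToricAux.castChar χ₀} := by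
      rw [hu']; exact hcase
    obtain ⟨w, hw0', hwp⟩ := ToricAux.hyp_inter_nonempty (χ₀, a₀) p prim0 hcast0 h3
    have j1 : JoinedIn A.sing z w :=
      ((ToricAux.hyp_pathConnected (χ₀, a₀) prim0).joinedIn z hz0 w hw0').mono (hsub _ hp₀X)
    have j2 : JoinedIn A.sing w t :=
      ((ToricAux.hyp_pathConnected p hprim).joinedIn w hwp t htp).mono (hsub p hpX)
    exact j1.trans j2
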